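/- arXiv:1503.04994 — 3 statements merged into one kernel-verified Lean document; each statement's English description precedes it below -/
import Mathlib

section
/- For any two double-vertex dominators {v1, v2} and {v3, v4} of a vertex u, there exists a double-vertex dominator {v5, v6} of u that is dominated by both {v1, v2} and {v3, v4} (the double-vertex dominators of u form a meet-semilattice under the domination order). -/
/-- A nonempty directed path `p` from `a` to `b` in the graph with edge relation `E`. -/
def IsPath {V : Type*} (E : V → V → Prop) (p : List V) (a b : V) : Prop :=
  p ≠ [] ∧ p.head? = some a ∧ p.getLast? = some b ∧ p.Chain' E

/-- `A` dominates `B` with respect to `root`: every path from a vertex of `B` to `root`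
contains a vertex of `A`. -/
def Dominates {V : Type*} (E : V → V → Prop) (root : V) (A B : Set V) : Prop :=
  ∀ b ∈ B, ∀ p : List V, IsPath E p b root → ∃ a ∈ A, a ∈ p

/-- `A` is a dominator of `B`: it dominates `B` and no proper subset `A \ {v}` does. -/
def IsDominator {V : Type*} (E : V → V → Prop) (root : V) (A B : Set V) : Prop :=
  Dominates E root A B ∧ ∀ v ∈ A, ¬ Dominates E root (A \ {v}) B

/-- `{v, w}` is a double-vertex dominator of `u`. -/
def DoubleDom {V : Type*} (E : V → V → Prop) (root : V) (u v w : V) : Prop :=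
  v ≠ w ∧ Dominates E root {v, w} {u} ∧
    ¬ Dominates E root {v} {u} ∧ ¬ Dominates E root {w} {u}

/-- The edge relation `E` is acyclic. -/
def Acyclic {V : Type*} (E : V → V → Prop) : Prop :=
  ∀ a b, E a b → ¬ Relation.ReflTransGen E b a

section Helpers

variable {V : Type*} {E : V → V → Prop}

lemma isPath_head_mem {p : List V} {a b : V} (h : IsPath E p a b) : a ∈ p := by
  obtain ⟨hne, hh, -, -⟩ := h
  exact List.mem_of_mem_head? (by rw [hh]; simp)

lemma isPath_last_mem {p : List V} {a b : V} (h : IsPath E p a b) : b ∈ p := by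
  obtain ⟨hne, -, hl, -⟩ := h
  exact List.mem_of_mem_getLast? (by rw [hl]; simp)

lemma isPath_singleton (a : V) : IsPath E [a] a a :=
  ⟨by simp, rfl, rfl, List.isChain_singleton a⟩

lemma isPath_append {p q : List V} {a b c : V} (hp : IsPath E p a b) (hq : IsPath E q b c) :
    ∃ r, IsPath E r a c ∧ ∀ x ∈ r, x ∈ p ∨ x ∈ q := by
  obtain ⟨hpne, hph, hpl, hpc⟩ := hp
  obtain ⟨hqne, hqh, hql, hqc⟩ := hq
  obtain ⟨b', t, rfl⟩ := List.exists_cons_of_ne_nil hqne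
  have hb : b' = b := by simpa using hqh
  rcases eq_or_ne t [] with rfl | htne
  · have hcb : c = b' := by simpa using hql.symm
    exact ⟨p, ⟨hpne, hph, by rw [hpl, hcb, hb], hpc⟩, fun x hx => Or.inl hx⟩
  · obtain ⟨t0, ts, rfl⟩ := List.exists_cons_of_ne_nil htne
    refine ⟨p ++ (t0 :: ts), ⟨by simp [hpne], ?_, ?_, ?_⟩, ?_⟩
    · rw [List.head?_append_of_ne_nil _ hpne]; exact hph
    · rw [List.getLast?_append_of_ne_nil _ (by simp : (t0 :: ts) ≠ [])]
      rwa [List.getLast?_cons_cons] at hql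
    · rw [List.Chain', List.isChain_append]
      refine ⟨hpc, (List.isChain_cons.mp hqc).2, ?_⟩
      intro x hx y hy
      have hx' : b = x := by rw [hpl] at hx; simpa using hx
      have hy' : t0 = y := by simpa using hy
      rw [← hx', ← hy']
      have := (List.isChain_cons.mp hqc).1 t0 rfl
      rwa [hb] at this
    · intro x hx
      rcases List.mem_append.mp hx with h | h
      · exact Or.inl h
      · exact Or.inr (List.mem_cons_of_mem _ h)

lemma firstHit (S : Set V) :
    ∀ (p : List V) (a b : V), IsPath E p a b → (∃ s ∈ S, s ∈ p) →
      ∃ s ∈ S, ∃ q, IsPath E q a s ∧ (∀ y ∈ q, y ∈ p) ∧ (∀ y ∈ q, y ∈ S → y = s) := by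
  intro p
  induction p with
  | nil => intro a b h _; exact absurd rfl h.1
  | cons hd tl ih =>
    intro a b h hhit
    obtain ⟨-, hh, hl, hc⟩ := h
    have ha : hd = a := by simpa using hh
    subst ha
    by_cases hS : hd ∈ S
    · exact ⟨hd, hS, [hd], isPath_singleton hd, by simp, by simp⟩
    · have htne : tl ≠ [] := by
        rintro rfl
        obtain ⟨s, hsS, hs⟩ := hhit
        simp at hs
        exact hS (hs ▸ hsS)
      obtain ⟨h', t', rfl⟩ := List.exists_cons_of_ne_nil htne
      have htp : IsPath E (h' :: t') h' b :=
        ⟨by simp, rfl, by rwa [List.getLast?_cons_cons] at hl, (List.isChain_cons.mp hc).2⟩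
      have hhit' : ∃ s ∈ S, s ∈ h' :: t' := by
        obtain ⟨s, hsS, hs⟩ := hhit
        rcases List.mem_cons.mp hs with rfl | h
        · exact absurd hsS hS
        · exact ⟨s, hsS, h⟩
      obtain ⟨s, hsS, q, hq, hsub, hfirst⟩ := ih h' b htp hhit'
      obtain ⟨q0, qs, rfl⟩ := List.exists_cons_of_ne_nil hq.1
      have hq0 : q0 = h' := by have := hq.2.1; simpa using this
      refine ⟨s, hsS, hd :: q0 :: qs, ⟨by simp, rfl, ?_, ?_⟩, ?_, ?_⟩
      · rw [List.getLast?_cons_cons]; exact hq.2.2.1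
      · rw [List.Chain', List.isChain_cons_cons]
        exact ⟨hq0 ▸ (List.isChain_cons.mp hc).1 h' rfl, hq.2.2.2⟩
      · intro y hy
        rcases List.mem_cons.mp hy with rfl | h
        · exact List.mem_cons_self
        · exact List.mem_cons_of_mem _ (hsub y h)
      · intro y hy hyS
        rcases List.mem_cons.mp hy with rfl | h
        · exact absurd hyS hS
        · exact hfirst y h hyS

end Helpers

section Main

variable {V : Type*} {E : V → V → Prop} {root : V}

lemma dd_symm {u v w : V} (h : DoubleDom E root u v w) : DoubleDom E root u w v := by
  obtain ⟨h1, h2, h3, h4⟩ := h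
  exact ⟨h1.symm, by rwa [Set.pair_comm w v], h4, h3⟩

lemma not_dom_witness {x : V} {A : Set V} (h : ¬ Dominates E root A {x}) :
    ∃ p, IsPath E p x root ∧ ∀ a ∈ A, a ∉ p := by
  simp only [Dominates, not_forall] at h
  obtain ⟨b, hb, p, hp, hnot⟩ := h
  have hbx : b = x := hb
  subst hbx
  push_neg at hnot
  exact ⟨p, hp, hnot⟩

lemma dom_of_singles {x y : V} {A : Set V} (h1 : Dominates E root A {x})
    (h2 : Dominates E root A {y}) : Dominates E root A {x, y} := by
  intro b hb p hp
  rcases hb with rfl | hb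
  · exact h1 b rfl p hp
  · exact h2 b hb p hp

lemma dom_pair_refl {x y : V} : Dominates E root ({x, y} : Set V) {x, y} :=
  fun b hb p hp => ⟨b, hb, isPath_head_mem hp⟩

lemma key (u v₁ v₂ v₃ v₄ : V)
    (h12 : DoubleDom E root u v₁ v₂) (h34 : DoubleDom E root u v₃ v₄)
    (hc2 : ¬ Dominates E root {v₃, v₄} {v₂}) (hc4 : ¬ Dominates E root {v₁, v₂} {v₄}) :
    ∃ v₅ v₆, DoubleDom E root u v₅ v₆ ∧
      Dominates E root {v₁, v₂} {v₅, v₆} ∧ Dominates E root {v₃, v₄} {v₅, v₆} := by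
  obtain ⟨hne12, hdom12, hnd1, hnd2⟩ := h12
  obtain ⟨hne34, hdom34, hnd3, hnd4⟩ := h34
  -- witnesses
  obtain ⟨Q2, hQ2, hQ2av⟩ := not_dom_witness hc2
  obtain ⟨Q4, hQ4, hQ4av⟩ := not_dom_witness hc4
  have hQ2₃ : v₃ ∉ Q2 := hQ2av v₃ (by simp)
  have hQ2₄ : v₄ ∉ Q2 := hQ2av v₄ (by simp)
  have hQ4₁ : v₁ ∉ Q4 := hQ4av v₁ (by simp)
  have hQ4₂ : v₂ ∉ Q4 := hQ4av v₂ (by simp)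
  have hne23 : v₂ ≠ v₃ := fun h => hQ2₃ (h ▸ isPath_head_mem hQ2)
  have hne24 : v₂ ≠ v₄ := fun h => hQ2₄ (h ▸ isPath_head_mem hQ2)
  have hne41 : v₄ ≠ v₁ := fun h => hQ4₁ (h ▸ isPath_head_mem hQ4)
  obtain ⟨P2, hP2, hP2av⟩ := not_dom_witness hnd1
  obtain ⟨P4, hP4, hP4av⟩ := not_dom_witness hnd3
  have hP2₁ : v₁ ∉ P2 := hP2av v₁ rfl
  have hP4₃ : v₃ ∉ P4 := hP4av v₃ rfl
  -- domination of u, in convenient form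
  have D12 : ∀ p, IsPath E p u root → v₁ ∈ p ∨ v₂ ∈ p := by
    intro p hp
    obtain ⟨a, ha, hap⟩ := hdom12 u rfl p hp
    rcases ha with rfl | ha
    · exact Or.inl hap
    · exact Or.inr (ha ▸ hap)
  have D34 : ∀ p, IsPath E p u root → v₃ ∈ p ∨ v₄ ∈ p := by
    intro p hp
    obtain ⟨a, ha, hap⟩ := hdom34 u rfl p hp
    rcases ha with rfl | ha
    · exact Or.inl hap
    · exact Or.inr (ha ▸ hap)
  -- killers
  have killv2 : ∀ q, IsPath E q u v₂ → v₃ ∉ q → v₄ ∉ q → False := by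
    intro q hq h3 h4
    obtain ⟨r, hr, hmem⟩ := isPath_append hq hQ2
    rcases D34 r hr with h | h
    · rcases hmem v₃ h with h' | h' <;> [exact h3 h'; exact hQ2₃ h']
    · rcases hmem v₄ h with h' | h' <;> [exact h4 h'; exact hQ2₄ h']
  have killv4 : ∀ q, IsPath E q u v₄ → v₁ ∉ q → v₂ ∉ q → False := by
    intro q hq h1 h2
    obtain ⟨r, hr, hmem⟩ := isPath_append hq hQ4
    rcases D12 r hr with h | h
    · rcases hmem v₁ h with h' | h' <;> [exact h1 h'; exact hQ4₁ h']
    · rcases hmem v₂ h with h' | h' <;> [exact h2 h'; exact hQ4₂ h']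
  set S : Set V := {v₁, v₂, v₃, v₄} with hS
  have hv1S : v₁ ∈ S := by simp [hS]
  have hv2S : v₂ ∈ S := by simp [hS]
  have hv3S : v₃ ∈ S := by simp [hS]
  have hv4S : v₄ ∈ S := by simp [hS]
  -- construct B : u → v₃ avoiding v₁ v₂ v₄
  have hBex : ∃ B, IsPath E B u v₃ ∧ v₁ ∉ B ∧ v₂ ∉ B ∧ v₄ ∉ B := by
    have hhit : ∃ s ∈ S, s ∈ P2 := by
      rcases D12 P2 hP2 with h | h
      · exact absurd h hP2₁
      · exact ⟨v₂, hv2S, h⟩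
    obtain ⟨s, hsS, q, hq, hsub, hfirst⟩ := firstHit S P2 u root hP2 hhit
    have hsmem : s ∈ q := isPath_last_mem hq
    rcases (by simpa [hS, Set.mem_insert_iff] using hsS :
        s = v₁ ∨ s = v₂ ∨ s = v₃ ∨ s = v₄) with rfl | rfl | rfl | rfl
    · exact absurd (hsub s hsmem) hP2₁
    · exact absurd (killv2 q hq
        (fun h => hne23.symm (hfirst v₃ h hv3S))
        (fun h => hne24.symm (hfirst v₄ h hv4S))) not_false
    · exact ⟨q, hq,
        fun h => hP2₁ (hsub v₁ h),
        fun h => hne23 (hfirst v₂ h hv2S),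
        fun h => hne34.symm (hfirst v₄ h hv4S)⟩
    · exact absurd (killv4 q hq
        (fun h => hne41.symm (hfirst v₁ h hv1S))
        (fun h => hne24 (hfirst v₂ h hv2S))) not_false
  obtain ⟨B, hB, hB₁, hB₂, hB₄⟩ := hBex
  -- construct C : u → v₁ avoiding v₂ v₃ v₄
  have hCex : ∃ C, IsPath E C u v₁ ∧ v₂ ∉ C ∧ v₃ ∉ C ∧ v₄ ∉ C := by
    have hhit : ∃ s ∈ S, s ∈ P4 := by
      rcases D34 P4 hP4 with h | h
      · exact absurd h hP4₃
      · exact ⟨v₄, hv4S, h⟩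
    obtain ⟨s, hsS, q, hq, hsub, hfirst⟩ := firstHit S P4 u root hP4 hhit
    have hsmem : s ∈ q := isPath_last_mem hq
    rcases (by simpa [hS, Set.mem_insert_iff] using hsS :
        s = v₁ ∨ s = v₂ ∨ s = v₃ ∨ s = v₄) with rfl | rfl | rfl | rfl
    · exact ⟨q, hq,
        fun h => hne12 (hfirst v₂ h hv2S).symm,
        fun h => hP4₃ (hsub v₃ h),
        fun h => hne41 (hfirst v₄ h hv4S)⟩
    · exact absurd (killv2 q hq
        (fun h => hne23.symm (hfirst v₃ h hv3S))
        (fun h => hne24.symm (hfirst v₄ h hv4S))) not_false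
    · exact absurd (hsub s hsmem) hP4₃
    · exact absurd (killv4 q hq
        (fun h => hne41.symm (hfirst v₁ h hv1S))
        (fun h => hne24 (hfirst v₂ h hv2S))) not_false
  obtain ⟨C, hC, hC₂, hC₃, hC₄⟩ := hCex
  have hne13 : v₁ ≠ v₃ := fun h => hC₃ (h ▸ isPath_last_mem hC)
  -- c₁ : every path from v₁ hits {v₃, v₄}
  have c₁ : Dominates E root ({v₃, v₄} : Set V) {v₁} := by
    intro b hb p hp
    have hp' : IsPath E p v₁ root := by rwa [show b = v₁ from hb] at hp
    obtain ⟨r, hr, hmem⟩ := isPath_append hC hp'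
    rcases D34 r hr with h | h
    · rcases hmem v₃ h with h' | h' <;> [exact absurd h' hC₃; exact ⟨v₃, by simp, h'⟩]
    · rcases hmem v₄ h with h' | h' <;> [exact absurd h' hC₄; exact ⟨v₄, by simp, h'⟩]
  have c₃ : Dominates E root ({v₁, v₂} : Set V) {v₃} := by
    intro b hb p hp
    have hp' : IsPath E p v₃ root := by rwa [show b = v₃ from hb] at hp
    obtain ⟨r, hr, hmem⟩ := isPath_append hB hp'
    rcases D12 r hr with h | h
    · rcases hmem v₁ h with h' | h' <;> [exact absurd h' hB₁; exact ⟨v₁, by simp, h'⟩]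
    · rcases hmem v₂ h with h' | h' <;> [exact absurd h' hB₂; exact ⟨v₂, by simp, h'⟩]
  -- {v₁, v₃} dominates u
  have dom13 : Dominates E root ({v₁, v₃} : Set V) {u} := by
    intro b hb p hp
    have hp' : IsPath E p u root := by rwa [show b = u from hb] at hp
    clear hp
    by_contra hcon
    push_neg at hcon
    have h1p : v₁ ∉ p := hcon v₁ (by simp)
    have h3p : v₃ ∉ p := hcon v₃ (by simp)
    have hhit : ∃ s ∈ S, s ∈ p := by
      rcases D12 p hp' with h | h
      · exact absurd h h1p
      · exact ⟨v₂, hv2S, h⟩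
    obtain ⟨s, hsS, q, hq, hsub, hfirst⟩ := firstHit S p u root hp' hhit
    have hsmem : s ∈ q := isPath_last_mem hq
    rcases (by simpa [hS, Set.mem_insert_iff] using hsS :
        s = v₁ ∨ s = v₂ ∨ s = v₃ ∨ s = v₄) with rfl | rfl | rfl | rfl
    · exact h1p (hsub s hsmem)
    · exact killv2 q hq (fun h => h3p (hsub v₃ h))
        (fun h => hne24.symm (hfirst v₄ h hv4S))
    · exact h3p (hsub s hsmem)
    · exact killv4 q hq (fun h => h1p (hsub v₁ h))
        (fun h => hne24 (hfirst v₂ h hv2S))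
  refine ⟨v₁, v₃, ⟨hne13, dom13, hnd1, hnd3⟩, ?_, ?_⟩
  · refine dom_of_singles ?_ c₃
    intro b hb p hp
    exact ⟨b, by simp [show b = v₁ from hb], isPath_head_mem hp⟩
  · refine dom_of_singles c₁ ?_
    intro b hb p hp
    exact ⟨b, by simp [show b = v₃ from hb], isPath_head_mem hp⟩

end Main

theorem doubleDom_meet {V : Type*} [Fintype V] (E : V → V → Prop) (root : V)
    (hacyc : Acyclic E) (u v₁ v₂ v₃ v₄ : V)
    (h12 : DoubleDom E root u v₁ v₂) (h34 : DoubleDom E root u v₃ v₄) :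
    ∃ v₅ v₆, DoubleDom E root u v₅ v₆ ∧
      Dominates E root {v₁, v₂} {v₅, v₆} ∧ Dominates E root {v₃, v₄} {v₅, v₆} := by
  by_cases hA : Dominates E root {v₃, v₄} {v₁} ∧ Dominates E root {v₃, v₄} {v₂}
  · exact ⟨v₁, v₂, h12, dom_pair_refl, dom_of_singles hA.1 hA.2⟩
  by_cases hB : Dominates E root {v₁, v₂} {v₃} ∧ Dominates E root {v₁, v₂} {v₄}
  · exact ⟨v₃, v₄, h34, dom_of_singles hB.1 hB.2, dom_pair_refl⟩
  rcases not_and_or.mp hA with hc1 | hc2 <;> rcases not_and_or.mp hB with hc3 | hc4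
  · have h := key u v₂ v₁ v₄ v₃ (dd_symm h12) (dd_symm h34)
      (by rwa [Set.pair_comm v₄ v₃]) (by rwa [Set.pair_comm v₂ v₁])
    rwa [Set.pair_comm v₂ v₁, Set.pair_comm v₄ v₃] at h
  · have h := key u v₂ v₁ v₃ v₄ (dd_symm h12) h34 hc1
      (by rwa [Set.pair_comm v₂ v₁])
    rwa [Set.pair_comm v₂ v₁] at h
  · have h := key u v₁ v₂ v₄ v₃ h12 (dd_symm h34)
      (by rwa [Set.pair_comm v₄ v₃]) hc3
    rwa [Set.pair_comm v₄ v₃] at h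
  · exact key u v₁ v₂ v₃ v₄ h12 h34 hc2 hc4
end

section
/- The matching relation on a vertex's double-vertex dominators is totally ordered: for any vertex v appearing in some double-vertex dominator of u, and any two vertices w, w' such that {v, w} ∈ D_u and {v, w'} ∈ D_u with w ≠ w', either {v, w} dominates {v, w'} or {v, w'} dominates {v, w}. -/
lemma first_split {α : Type*} {a : α} {l : List α} (h : a ∈ l) :
    ∃ s t, l = s ++ a :: t ∧ a ∉ s := by
  classical
  induction l with
  | nil => cases h
  | cons x xs ih =>
    by_cases hx : x = a
    · exact ⟨[], xs, by simp [hx], by simp⟩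
    · rcases List.mem_cons.mp h with h | h
      · exact absurd h.symm hx
      · rcases ih h with ⟨s, t, rfl, hs⟩
        exact ⟨x :: s, t, rfl, by simp only [List.mem_cons, not_or]; exact ⟨fun e => hx e.symm, hs⟩⟩

lemma splice {V : Type*} {E : V → V → Prop} {p q : List V} {a b c : V}
    (hp : IsPath E p a b) (hq : IsPath E q b c) :
    IsPath E (p ++ q.tail) a c := by
  obtain ⟨hp0, hph, hpl, hpc⟩ := hp
  obtain ⟨hq0, hqh, hql, hqc⟩ := hq
  cases q with
  | nil => exact absurd rfl hq0
  | cons y qt =>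
    simp only [List.head?_cons, Option.some.injEq] at hqh
    subst hqh
    refine ⟨by simp [hp0], ?_, ?_, ?_⟩
    · cases p with
      | nil => exact absurd rfl hp0
      | cons a0 ps => simpa using hph
    · cases qt with
      | nil =>
        simp only [List.getLast?_singleton, Option.some.injEq] at hql
        subst hql
        simpa using hpl
      | cons z zt =>
        rw [List.getLast?_cons_cons] at hql
        simp [List.getLast?_append, hql]
    · unfold List.Chain' at hqc ⊢; rw [List.isChain_append]
      refine ⟨hpc, hqc.tail, ?_⟩
      intro x hx y hy
      rw [hpl, Option.mem_def, Option.some.injEq] at hx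
      subst hx
      cases qt with
      | nil => simp at hy
      | cons z zt =>
        simp only [List.tail_cons, List.head?_cons, Option.mem_def, Option.some.injEq] at hy
        subst hy
        exact (List.isChain_cons_cons.mp hqc).1

lemma path_prefix {V : Type*} {E : V → V → Prop} {s t : List V} {a b x : V}
    (hp : IsPath E (s ++ x :: t) a b) : IsPath E (s ++ [x]) a x := by
  obtain ⟨hp0, hph, _, hpc⟩ := hp
  refine ⟨by simp, ?_, ?_, ?_⟩
  · cases s with
    | nil => simpa using hph
    | cons s0 ss => simpa using hph
  · simp [List.getLast?_concat]
  · exact hpc.prefix ⟨t, by simp⟩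

theorem matching_total_order {V : Type*} [Fintype V] (E : V → V → Prop) (root : V)
    (hacyc : Acyclic E) (u v w w' : V)
    (h : DoubleDom E root u v w) (h' : DoubleDom E root u v w') (hne : w ≠ w') :
    Dominates E root {v, w} {v, w'} ∨ Dominates E root {v, w'} {v, w} := by
  by_contra hcon
  push_neg at hcon
  obtain ⟨h1, h2⟩ := hcon
  have getP : ∀ {a b : V}, ¬ Dominates E root {v, a} {v, b} →
      ∃ P, IsPath E P b root ∧ v ∉ P ∧ a ∉ P := by
    intro a b hd
    unfold Dominates at hd
    push_neg at hd
    obtain ⟨x, hx, P, hP, hmiss⟩ := hd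
    have hv : v ∉ P := hmiss v (by simp)
    have ha : a ∉ P := hmiss a (by simp)
    simp only [Set.mem_insert_iff, Set.mem_singleton_iff] at hx
    rcases hx with rfl | rfl
    · exact absurd (List.mem_of_mem_head? (by rw [hP.2.1]; rfl)) hv
    · exact ⟨P, hP, hv, ha⟩
  obtain ⟨P, hP, hPv, hPw⟩ := getP h1   -- path from w' to root avoiding v, w
  obtain ⟨Q, hQ, hQv, hQw'⟩ := getP h2  -- path from w to root avoiding v, w'
  -- path R from u to root avoiding v
  have hnd := h.2.2.1
  unfold Dominates at hnd
  push_neg at hnd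
  obtain ⟨x, hx, R, hR, hmiss⟩ := hnd
  simp only [Set.mem_singleton_iff] at hx
  subst hx
  have hRv : v ∉ R := hmiss v (by simp)
  have hRw : w ∈ R := by
    obtain ⟨a, ha, haR⟩ := h.2.1 x (by simp) R hR
    simp only [Set.mem_insert_iff, Set.mem_singleton_iff] at ha
    rcases ha with rfl | rfl
    · exact absurd haR hRv
    · exact haR
  have hRw' : w' ∈ R := by
    obtain ⟨a, ha, haR⟩ := h'.2.1 x (by simp) R hR
    simp only [Set.mem_insert_iff, Set.mem_singleton_iff] at ha
    rcases ha with rfl | rfl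
    · exact absurd haR hRv
    · exact haR
  obtain ⟨s, t, rfl, hws⟩ := first_split hRw
  by_cases hw's : w' ∈ s
  · -- w' occurs before w; splice prefix up to w' with P, get path from u avoiding v and w
    obtain ⟨s', t', rfl, _⟩ := first_split hw's
    have hR' : IsPath E (s' ++ w' :: (t' ++ w :: t)) x root := by
      simpa using hR
    have hpre : IsPath E (s' ++ [w']) x w' := path_prefix hR'
    have hglue : IsPath E ((s' ++ [w']) ++ P.tail) x root := splice hpre hP
    obtain ⟨a, ha, haG⟩ := h.2.1 x (by simp) _ hglue
    simp only [Set.mem_insert_iff, Set.mem_singleton_iff] at ha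
    simp only [List.mem_append, List.mem_singleton] at haG
    rcases ha with rfl | rfl
    · rcases haG with (hv | rfl) | hv
      · exact hRv (by simp [hv])
      · exact hRv (by simp)
      · exact hPv (List.mem_of_mem_tail hv)
    · rcases haG with (hs | he) | hv
      · exact hws (by simp [hs])
      · exact hne he
      · exact hPw (List.mem_of_mem_tail hv)
  · -- w occurs before any w'; splice prefix up to w with Q, avoiding v and w'
    have hpre : IsPath E (s ++ [w]) x w := path_prefix hR
    have hglue : IsPath E ((s ++ [w]) ++ Q.tail) x root := splice hpre hQ
    obtain ⟨a, ha, haG⟩ := h'.2.1 x (by simp) _ hglue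
    simp only [Set.mem_insert_iff, Set.mem_singleton_iff] at ha
    simp only [List.mem_append, List.mem_singleton] at haG
    rcases ha with rfl | rfl
    · rcases haG with (hv | rfl) | hv
      · exact hRv (by simp [hv])
      · exact hRv (by simp)
      · exact hQv (List.mem_of_mem_tail hv)
    · rcases haG with (hs | he) | hv
      · exact hw's hs
      · exact hne he.symm
      · exact hQw' (List.mem_of_mem_tail hv)
end

section
/- Every vertex v ≠ root of a finite directed acyclic graph in which every vertex has a path to root has a unique immediate single-vertex dominator: there is a unique vertex d ≠ v such that d dominates v and every other single-vertex strict dominator of v dominates d. -/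
private lemma chain_rtg {V : Type*} {E : V → V → Prop} :
    ∀ {l : List V} {a b : V}, List.Chain E a l → b ∈ l → Relation.ReflTransGen E a b := by
  intro l
  induction l with
  | nil => intro a b _ h; simp at h
  | cons c l ih =>
    intro a b hc hb
    rw [show List.Chain E a (c :: l) = List.IsChain E (a :: c :: l) from rfl, List.chain_cons] at hc
    rcases List.mem_cons.1 hb with rfl | hb
    · exact Relation.ReflTransGen.single hc.1
    · exact Relation.ReflTransGen.head hc.1 (ih hc.2 hb)

private lemma nodup_of_chain' {V : Type*} {E : V → V → Prop} (hacyc : Acyclic E) :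
    ∀ {p : List V}, p.Chain' E → p.Nodup := by
  intro p
  induction p with
  | nil => intro _; exact List.nodup_nil
  | cons a l ih =>
    intro h
    have hch : List.Chain E a l := h
    have hl : l.Chain' E := (List.isChain_cons.1 h).2
    refine List.nodup_cons.2 ⟨?_, ih hl⟩
    intro hmem
    cases l with
    | nil => simp at hmem
    | cons c l' =>
      rw [show List.Chain E a (c :: l') = List.IsChain E (a :: c :: l') from rfl, List.chain_cons] at hch
      rcases List.mem_cons.1 hmem with rfl | hmem'
      · exact hacyc a a hch.1 Relation.ReflTransGen.refl
      · exact hacyc a c hch.1 (chain_rtg hch.2 hmem')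

private lemma suffix_path {V : Type*} {E : V → V → Prop} {root : V} {p s t : List V}
    {a b : V} (h : IsPath E p a root) (hst : p = s ++ b :: t) :
    IsPath E (b :: t) b root := by
  obtain ⟨hne, hh, hl, hc⟩ := h
  subst hst
  refine ⟨List.cons_ne_nil _ _, rfl, ?_, (List.isChain_append.1 hc).2.1⟩
  rwa [List.getLast?_append_of_ne_nil _ (List.cons_ne_nil _ _)] at hl

private lemma splice_path {V : Type*} {E : V → V → Prop} {root : V} {p s t q : List V}
    {vtx b : V} (h : IsPath E p vtx root) (hst : p = s ++ b :: t) (hs : s ≠ [])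
    (hq : IsPath E q b root) : IsPath E (s ++ q) vtx root := by
  obtain ⟨hne, hh, hl, hc⟩ := h
  obtain ⟨hqne, hqh, hql, hqc⟩ := hq
  subst hst
  obtain ⟨hcs, hcbt, hlink⟩ := List.isChain_append.1 hc
  refine ⟨by simp [hs], ?_, ?_, ?_⟩
  · rw [List.head?_append_of_ne_nil _ hs]
    rwa [List.head?_append_of_ne_nil _ hs] at hh
  · rw [List.getLast?_append_of_ne_nil _ hqne]
    exact hql
  · refine List.isChain_append.2 ⟨hcs, hqc, ?_⟩
    intro x hx y hy
    rw [hqh] at hy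
    cases hy
    exact hlink x hx b rfl

private lemma mem_of_path_last {V : Type*} {E : V → V → Prop} {root : V} {p : List V}
    {a : V} (h : IsPath E p a root) : root ∈ p := by
  obtain ⟨_, _, hl, _⟩ := h
  obtain ⟨h', h''⟩ := List.mem_getLast?_eq_getLast (by rw [hl]; rfl : root ∈ p.getLast?)
  rw [h'']
  exact List.getLast_mem h'

theorem immediate_single_dominator_unique {V : Type*} [Fintype V] (E : V → V → Prop)
    (root : V) (hacyc : Acyclic E)
    (hreach : ∀ v : V, ∃ p : List V, IsPath E p v root)
    (v : V) (hv : v ≠ root) :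
    ∃! d : V, d ≠ v ∧ Dominates E root {d} {v} ∧
      ∀ d' : V, d' ≠ v → d' ≠ d → Dominates E root {d'} {v} →
        Dominates E root {d'} {d} := by
  classical
  obtain ⟨p, hp⟩ := hreach v
  have hpnodup : p.Nodup := nodup_of_chain' hacyc hp.2.2.2
  set S : Finset V := Finset.univ.filter (fun d => d ≠ v ∧ Dominates E root {d} {v}) with hS
  have hmemS : ∀ d, d ∈ S ↔ d ≠ v ∧ Dominates E root {d} {v} := by
    intro d; simp [hS]
  have hrootS : root ∈ S := by
    rw [hmemS]
    refine ⟨Ne.symm hv, ?_⟩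
    intro b hb q hq
    exact ⟨root, rfl, mem_of_path_last hq⟩
  -- every element of S lies on p
  have hSp : ∀ d ∈ S, d ∈ p := by
    intro d hd
    obtain ⟨hdv, hdd⟩ := (hmemS d).1 hd
    obtain ⟨a, ha, hap⟩ := hdd v rfl p hp
    have ha' : a = d := ha
    rwa [ha'] at hap
  obtain ⟨d, hdS, hdmin⟩ := Finset.exists_min_image S (fun x => p.idxOf x) ⟨root, hrootS⟩
  obtain ⟨hdv, hddom⟩ := (hmemS d).1 hdS
  obtain ⟨s, t, hst⟩ := List.append_of_mem (hSp d hdS)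
  have hds : d ∉ s := by
    have := hpnodup
    rw [hst, List.nodup_append] at this
    exact fun hmem => this.2.2 d hmem d List.mem_cons_self rfl
  have hdt : d ∉ t := by
    have := hpnodup
    rw [hst, List.nodup_append] at this
    exact (List.nodup_cons.1 this.2.1).1
  have hsne : s ≠ [] := by
    intro hnil
    apply hdv
    have := hp.2.1
    rw [hst, hnil, List.nil_append] at this
    simpa using this
  have hdidx : p.idxOf d = s.length := by
    rw [hst, List.idxOf_append_of_notMem hds, List.idxOf_cons_self]
    simp
  -- the key property of d
  have hkey : ∀ d' : V, d' ≠ v → d' ≠ d → Dominates E root {d'} {v} →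
      Dominates E root {d'} {d} := by
    intro d' hd'v hd'd hd'dom b hb q hq
    have hb' : b = d := hb
    rw [hb'] at hq
    have hpath : IsPath E (s ++ q) v root := splice_path hp hst hsne hq
    obtain ⟨a, ha, hmem0⟩ := hd'dom v rfl (s ++ q) hpath
    have ha' : a = d' := ha
    rw [ha'] at hmem0
    rcases List.mem_append.1 hmem0 with hmem | hmem
    · exfalso
      have hd'S : d' ∈ S := (hmemS d').2 ⟨hd'v, hd'dom⟩
      have hle := hdmin d' hd'S
      have hlt : p.idxOf d' < s.length := by
        rw [hst, List.idxOf_append_of_mem hmem]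
        exact (List.idxOf_lt_length_iff).2 hmem
      omega
    · exact ⟨d', rfl, hmem⟩
  refine ⟨d, ⟨hdv, hddom, hkey⟩, ?_⟩
  rintro d₂ ⟨hd₂v, hd₂dom, hd₂key⟩
  by_contra hne
  -- d₂ dominates d, and d dominates d₂
  have h1 : Dominates E root {d₂} {d} := hkey d₂ hd₂v hne hd₂dom
  have h2 : Dominates E root {d} {d₂} := hd₂key d hdv (Ne.symm hne) hddom
  -- suffix path from d
  have hsp : IsPath E (d :: t) d root := suffix_path hp hst
  obtain ⟨a, ha, hmem⟩ := h1 d rfl (d :: t) hsp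
  have ha' : a = d₂ := ha
  rw [ha'] at hmem
  have hd₂t : d₂ ∈ t := by
    rcases List.mem_cons.1 hmem with h | h
    · exact absurd h hne
    · exact h
  obtain ⟨m₁, m₂, hm⟩ := List.append_of_mem hd₂t
  have hst2 : p = (s ++ d :: m₁) ++ d₂ :: m₂ := by
    rw [hst, hm]; simp
  have hsp2 : IsPath E (d₂ :: m₂) d₂ root := suffix_path hp hst2
  obtain ⟨a2, ha2, hmem2⟩ := h2 d₂ rfl (d₂ :: m₂) hsp2
  have ha2' : a2 = d := ha2
  rw [ha2'] at hmem2
  rcases List.mem_cons.1 hmem2 with h | h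
  · exact hne h.symm
  · apply hdt
    rw [hm]
    exact List.mem_append.2 (Or.inr (List.mem_cons_of_mem _ h))
end
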